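/- Let G be a group and let S ⊆ G be a generating set with S = S⁻¹ that is closed under conjugation, let ℓ : G → ℕ denote word length with respect to S, and fix w ∈ G. Let [1,w] = {u ∈ G : ℓ(u) + ℓ(u⁻¹w) = ℓ(w)}, partially ordered by u ≼ v iff ℓ(u) + ℓ(u⁻¹v) + ℓ(v⁻¹w) = ℓ(w). Then the map u ↦ u⁻¹w is a bijection from [1,w] to itself, and it reverses the order: u ≼ v implies v⁻¹w ≼ u⁻¹w. In particular the poset [1,w] is self-dual. -/

import Mathlib

/-- The word length of `g` with respect to a generating set `S`: the least number of elements
of `S` whose product is `g`. -/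
noncomputable def wordLength {G : Type*} [Group G] (S : Set G) (g : G) : ℕ :=
  sInf {k | ∃ l : List G, l.length = k ∧ (∀ x ∈ l, x ∈ S) ∧ l.prod = g}

lemma wordLength_inv {G : Type*} [Group G] {S : Set G}
    (hsymm : ∀ s ∈ S, s⁻¹ ∈ S) (g : G) : wordLength S g⁻¹ = wordLength S g := by
  have key : ∀ (h : G) (k : ℕ),
      (∃ l : List G, l.length = k ∧ (∀ x ∈ l, x ∈ S) ∧ l.prod = h) →
      (∃ l : List G, l.length = k ∧ (∀ x ∈ l, x ∈ S) ∧ l.prod = h⁻¹) := by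
    rintro h k ⟨l, rfl, hS, rfl⟩
    refine ⟨(l.map Inv.inv).reverse, by simp, ?_, (List.prod_inv_reverse l).symm⟩
    intro x hx
    simp only [List.mem_reverse, List.mem_map] at hx
    obtain ⟨y, hy, rfl⟩ := hx
    exact hsymm y (hS y hy)
  unfold wordLength
  congr 1
  ext k
  constructor
  · intro hk
    simpa using key g⁻¹ k hk
  · exact key g k

lemma wordLength_conj {G : Type*} [Group G] {S : Set G}
    (hconj : ∀ s ∈ S, ∀ g : G, g * s * g⁻¹ ∈ S) (h g : G) :
    wordLength S (h * g * h⁻¹) = wordLength S g := by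
  have key : ∀ (a c : G) (k : ℕ),
      (∃ l : List G, l.length = k ∧ (∀ x ∈ l, x ∈ S) ∧ l.prod = a) →
      (∃ l : List G, l.length = k ∧ (∀ x ∈ l, x ∈ S) ∧ l.prod = c * a * c⁻¹) := by
    rintro a c k ⟨l, rfl, hS, rfl⟩
    refine ⟨l.map (fun x => c * x * c⁻¹), by simp, ?_, ?_⟩
    · intro x hx
      simp only [List.mem_map] at hx
      obtain ⟨y, hy, rfl⟩ := hx
      exact hconj y (hS y hy) c
    · have := (MulAut.conj c).toMonoidHom.map_list_prod l
      simpa [MulAut.conj_apply, show (⇑(MulAut.conj c) : G → G) = fun x => c * x * c⁻¹ from funext fun x => MulAut.conj_apply c x] using this.symm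
  unfold wordLength
  congr 1
  ext k
  constructor
  · intro hk
    have := key (h * g * h⁻¹) h⁻¹ k hk
    simpa [mul_assoc] using this
  · exact key g h k

/-- Let `S` be a symmetric generating set of a group `G` closed under conjugation, with word
length `ℓ`, and fix `w ∈ G`.  The map `u ↦ u⁻¹w` is a bijection of the interval
`[1,w] = {u | ℓ(u) + ℓ(u⁻¹w) = ℓ(w)}` onto itself which reverses the partial order
`u ≼ v ↔ ℓ(u) + ℓ(u⁻¹v) + ℓ(v⁻¹w) = ℓ(w)`: the interval `[1,w]` is self-dual. -/
theorem interval_self_dual {G : Type*} [Group G] (S : Set G)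
    (hgen : Subgroup.closure S = ⊤)
    (hsymm : ∀ s ∈ S, s⁻¹ ∈ S)
    (hconj : ∀ s ∈ S, ∀ g : G, g * s * g⁻¹ ∈ S)
    (w : G) :
    Set.BijOn (fun u => u⁻¹ * w)
      {u : G | wordLength S u + wordLength S (u⁻¹ * w) = wordLength S w}
      {u : G | wordLength S u + wordLength S (u⁻¹ * w) = wordLength S w} ∧
    ∀ u v : G,
      wordLength S u + wordLength S (u⁻¹ * v) + wordLength S (v⁻¹ * w) = wordLength S w →
      wordLength S (v⁻¹ * w) + wordLength S ((v⁻¹ * w)⁻¹ * (u⁻¹ * w)) +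
          wordLength S ((u⁻¹ * w)⁻¹ * w) = wordLength S w := by
  set ℓ := wordLength S with hℓ
  have linv : ∀ g : G, ℓ g⁻¹ = ℓ g := wordLength_inv hsymm
  have lconj : ∀ h g : G, ℓ (h * g * h⁻¹) = ℓ g := wordLength_conj hconj
  -- ℓ(w⁻¹ g w) = ℓ g
  have lconj' : ∀ g : G, ℓ (w⁻¹ * g * w) = ℓ g := by
    intro g
    have := lconj w⁻¹ g
    simpa using this
  have key1 : ∀ u : G, ℓ ((u⁻¹ * w)⁻¹ * w) = ℓ u := by
    intro u
    have : (u⁻¹ * w)⁻¹ * w = w⁻¹ * u * w := by group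
    rw [this, lconj']
  constructor
  · refine ⟨?_, ?_, ?_⟩
    · intro u hu
      simp only [Set.mem_setOf_eq] at hu ⊢
      rw [key1 u, Nat.add_comm]
      exact hu
    · intro u _ v _ huv
      have : u⁻¹ * w = v⁻¹ * w := huv
      have := mul_right_cancel this
      exact inv_injective this
    · intro v hv
      refine ⟨w * v⁻¹, ?_, by group⟩
      simp only [Set.mem_setOf_eq] at hv ⊢
      have h1 : ℓ (w * v⁻¹) = ℓ (v⁻¹ * w) := by
        have : w * v⁻¹ = w * (v⁻¹ * w) * w⁻¹ := by group
        rw [this, lconj]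
      have h2 : (w * v⁻¹)⁻¹ * w = v := by group
      rw [h1, h2, Nat.add_comm]
      exact hv
  · intro u v h
    have e1 : (v⁻¹ * w)⁻¹ * (u⁻¹ * w) = w⁻¹ * (v * u⁻¹) * w := by group
    have e2 : ℓ (v * u⁻¹) = ℓ (u⁻¹ * v) := by
      have : v * u⁻¹ = v * (u⁻¹ * v) * v⁻¹ := by group
      rw [this, lconj]
    rw [e1, lconj', e2, key1 u]
    omega
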